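/- Tops-count lemma: let v be an anonymous voting rule on m candidates that is pairwise responsive, pairwise isolated, and satisfies ε-strong unanimity. Then for every candidate x and every pair of profiles P⃗ = (P_1,...,P_n), P⃗' = (P'_1,...,P'_n) such that |{i : top(P_i) = x}| = |{i : top(P'_i) = x}|, we have |v(x,P⃗) − v(x,P⃗')| ≤ 2mε. -/

import Mathlib

open Finset

variable {C : Type*}

/-- A preference ordering on `C`: a ranking of the candidates, where a higher
rank means more preferred. -/
abbrev Pref (C : Type*) [Fintype C] := C ≃ Fin (Fintype.card C)

/-- `x` is strictly preferred to `y` in `P`. -/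
def PrefOver [Fintype C] (P : Pref C) (x y : C) : Prop := P y < P x

/-- The top (most preferred) candidate of `P`. -/
def topC [Fintype C] [Nonempty C] (P : Pref C) : C :=
  P.symm ⟨Fintype.card C - 1, Nat.sub_lt Fintype.card_pos Nat.one_pos⟩

/-- `x` is directly above `y` in `P`. -/
def DirAbove [Fintype C] (P : Pref C) (x y : C) : Prop := (P x : ℕ) = (P y : ℕ) + 1

/-- The ordering `P` with candidates `x` and `y` swapped. -/
def swapIn [Fintype C] [DecidableEq C] (P : Pref C) (x y : C) : Pref C :=
  (Equiv.swap x y).trans P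

/-- A (randomized) voting rule: nonnegative selection probabilities summing to 1. -/
def IsVotingRule [Fintype C] {n : ℕ} (v : (Fin n → Pref C) → C → ℝ) : Prop :=
  (∀ Pvec x, 0 ≤ v Pvec x) ∧ (∀ Pvec, ∑ x, v Pvec x = 1)

def Anonymous [Fintype C] {n : ℕ} (v : (Fin n → Pref C) → C → ℝ) : Prop :=
  ∀ (σ : Equiv.Perm (Fin n)) (Pvec : Fin n → Pref C) (x : C), v (Pvec ∘ σ) x = v Pvec x

/-- Expected utility of a distribution `d` over candidates under utility `u`. -/
def EU [Fintype C] (u : C → ℝ) (d : C → ℝ) : ℝ := ∑ x, u x * d x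

/-- A `[0,1]`-valued utility function consistent with the ordering `P`. -/
def Consistent [Fintype C] (u : C → ℝ) (P : Pref C) : Prop :=
  (∀ x, u x ∈ Set.Icc (0 : ℝ) 1) ∧ ∀ x y, u x > u y ↔ PrefOver P x y

/-- The random dictatorship voting rule. -/
noncomputable def vdict [Fintype C] [Nonempty C] [DecidableEq C] {n : ℕ}
    (Pvec : Fin n → Pref C) (x : C) : ℝ :=
  ((Finset.univ.filter (fun i => topC (Pvec i) = x)).card : ℝ) / n

def StrategyProofRule [Fintype C] {n : ℕ} (v : (Fin n → Pref C) → C → ℝ) : Prop :=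
  ∀ (i : Fin n) (Pvec : Fin n → Pref C) (P' : Pref C) (u : C → ℝ),
    Consistent u (Pvec i) → EU u (v (Function.update Pvec i P')) ≤ EU u (v Pvec)

def IsBelief [Fintype C] [DecidableEq C] (φ : Pref C → ℝ) : Prop :=
  (∀ P, 0 ≤ φ P) ∧ ∑ P, φ P = 1

/-- The profile where voter `i` submits `Pi` and the other voters submit `Q`. -/
def profileWith [Fintype C] {n : ℕ} (i : Fin n) (Q : {j : Fin n // j ≠ i} → Pref C)
    (Pi : Pref C) : Fin n → Pref C :=
  fun j => if h : j = i then Pi else Q ⟨j, h⟩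

/-- Expected utility for voter `i` reporting `Pi` when the others' orderings are
i.i.d. with distribution `φ`. -/
noncomputable def beliefEU [Fintype C] [DecidableEq C] {n : ℕ}
    (v : (Fin n → Pref C) → C → ℝ) (i : Fin n) (φ : Pref C → ℝ) (u : C → ℝ)
    (Pi : Pref C) : ℝ :=
  ∑ Q : {j : Fin n // j ≠ i} → Pref C, (∏ j, φ (Q j)) * EU u (v (profileWith i Q Pi))

/-- Strategy-proofness with respect to a single i.i.d. belief `φ`. -/
def SPwrtBelief [Fintype C] [DecidableEq C] {n : ℕ}
    (v : (Fin n → Pref C) → C → ℝ) (φ : Pref C → ℝ) : Prop :=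
  ∀ (i : Fin n) (Pi Pi' : Pref C) (u : C → ℝ),
    Consistent u Pi → beliefEU v i φ u Pi' ≤ beliefEU v i φ u Pi

/-- Weak strategy-proofness: strategy-proofness w.r.t. all i.i.d. beliefs. -/
def WeaklySP [Fintype C] [DecidableEq C] {n : ℕ}
    (v : (Fin n → Pref C) → C → ℝ) : Prop :=
  ∀ φ : Pref C → ℝ, IsBelief φ → SPwrtBelief v φ

def ParetoEff [Fintype C] {n : ℕ} (ε : ℝ) (v : (Fin n → Pref C) → C → ℝ) : Prop :=
  ∀ (x y : C) (Pvec : Fin n → Pref C), (∀ i, PrefOver (Pvec i) x y) → v Pvec y ≤ ε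

def StrongUnanimity [Fintype C] [Nonempty C] {n : ℕ} (ε : ℝ)
    (v : (Fin n → Pref C) → C → ℝ) : Prop :=
  ∀ (x : C) (Pvec : Fin n → Pref C), (∀ i, topC (Pvec i) = x) → 1 - ε ≤ v Pvec x

def WeakUnanimity [Fintype C] [Nonempty C] {n : ℕ} (ε : ℝ)
    (v : (Fin n → Pref C) → C → ℝ) : Prop :=
  ∀ P : Pref C, 1 - ε ≤ v (fun _ => P) (topC P)

def SuperWeakUnanimity [Fintype C] [Nonempty C] {n : ℕ} (ε : ℝ)
    (v : (Fin n → Pref C) → C → ℝ) : Prop :=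
  ∀ x : C, ∃ Pvec : Fin n → Pref C, (∀ i, topC (Pvec i) = x) ∧ 1 - ε ≤ v Pvec x

def PairwiseResponsive [Fintype C] [DecidableEq C] {n : ℕ}
    (v : (Fin n → Pref C) → C → ℝ) : Prop :=
  ∀ (Pvec : Fin n → Pref C) (i : Fin n) (x y z : C),
    DirAbove (Pvec i) x y → z ≠ x → z ≠ y →
      v (Function.update Pvec i (swapIn (Pvec i) x y)) z = v Pvec z

def PairwiseIsolated [Fintype C] [DecidableEq C] {n : ℕ}
    (v : (Fin n → Pref C) → C → ℝ) : Prop :=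
  ∀ (i : Fin n) (Pvec Pvec' : Fin n → Pref C) (x y : C),
    DirAbove (Pvec i) x y → Pvec' i = Pvec i →
    (∀ j, j ≠ i → (PrefOver (Pvec j) x y ↔ PrefOver (Pvec' j) x y)) →
    v (Function.update Pvec' i (swapIn (Pvec' i) x y)) y - v Pvec' y =
      v (Function.update Pvec i (swapIn (Pvec i) x y)) y - v Pvec y

/-- The ordering `e` with candidate `x` moved to the top (relative order of the
other candidates preserved). -/
def moveToTop [Fintype C] [DecidableEq C] (e : Pref C) (x : C) : Pref C :=
  e.trans ((Fin.revPerm.trans (Fin.cycleRange (e x).rev)).trans Fin.revPerm)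

/-- The ordering `e` with candidate `x` moved to the bottom (relative order of
the other candidates preserved). -/
def moveToBot [Fintype C] [DecidableEq C] (e : Pref C) (x : C) : Pref C :=
  e.trans (Fin.cycleRange (e x))

/-- The canonical profile `P⃗^{x,j}`: the first `j` voters rank `x` on top and
the remaining voters rank `x` on the bottom, with the other candidates ordered
according to the fixed ordering `e`. -/
def canonProfile [Fintype C] [DecidableEq C] {n : ℕ} (e : Pref C) (x : C) (j : ℕ) :
    Fin n → Pref C :=
  fun i => if (i : ℕ) < j then moveToTop e x else moveToBot e x

/-- `v'(x,j)`: the selection probability of `x` on the canonical profile with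
exactly `j` voters ranking `x` first. -/
def vTopCount [Fintype C] [DecidableEq C] {n : ℕ} (v : (Fin n → Pref C) → C → ℝ)
    (e : Pref C) (x : C) (j : ℕ) : ℝ :=
  v (canonProfile e x j) x


set_option linter.unusedSectionVars false
set_option linter.unusedVariables false
set_option maxHeartbeats 1000000

namespace TC
variable [Fintype C] [DecidableEq C]

def krank (k : C → ℕ) (c : C) : ℕ := (univ.filter fun d => k d < k c).card

lemma krank_lt (k : C → ℕ) (c : C) : krank k c < Fintype.card C := by
  have : (univ.filter fun d => k d < k c) ⊂ univ := by
    refine Finset.ssubset_iff_of_subset (Finset.subset_univ _) |>.mpr ⟨c, mem_univ _, ?_⟩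
    simp
  simpa [krank, Finset.card_univ] using Finset.card_lt_card this

lemma krank_strictMono {k : C → ℕ} {a b : C} (h : k a < k b) : krank k a < krank k b := by
  apply Finset.card_lt_card
  constructor
  · intro d hd
    simp only [mem_filter, mem_univ, true_and] at hd ⊢
    omega
  · intro hsub
    have h2 : a ∈ univ.filter fun d => k d < k b := by simp [h]
    have h3 := hsub h2
    simp at h3

lemma krank_injective {k : C → ℕ} (hk : Function.Injective k) : Function.Injective (krank k) := by
  intro a b hab
  rcases lt_trichotomy (k a) (k b) with h | h | h
  · exact absurd hab (Nat.ne_of_lt (krank_strictMono h))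
  · exact hk h
  · exact absurd hab.symm (Nat.ne_of_lt (krank_strictMono h))

noncomputable def kOrd (k : C → ℕ) (hk : Function.Injective k) : Pref C :=
  Equiv.ofBijective (fun c => (⟨krank k c, krank_lt k c⟩ : Fin (Fintype.card C)))
    ((Fintype.bijective_iff_injective_and_card _).mpr
      ⟨fun a b hab => krank_injective hk (by simpa [Fin.ext_iff] using hab), by simp⟩)

lemma kOrd_val (k : C → ℕ) (hk : Function.Injective k) (c : C) :
    (kOrd k hk c : ℕ) = krank k c := rfl

lemma kOrd_lt_iff (k : C → ℕ) (hk : Function.Injective k) {a b : C} :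
    kOrd k hk a < kOrd k hk b ↔ k a < k b := by
  constructor
  · intro h
    rcases lt_trichotomy (k a) (k b) with h' | h' | h'
    · exact h'
    · exact absurd (hk h') (by rintro rfl; exact lt_irrefl _ h)
    · exact absurd (krank_strictMono h') (by
        rw [Fin.lt_def] at h; simp only [kOrd_val] at h; omega)
  · intro h
    rw [Fin.lt_def]
    exact krank_strictMono h



section Part2
variable [Fintype C] [DecidableEq C] [Nonempty C]

lemma topC_eq_iff (P : Pref C) (c : C) : topC P = c ↔ ∀ z, P z ≤ P c := by
  unfold topC
  rw [Equiv.symm_apply_eq]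
  constructor
  · intro h z
    have hval : (P c : ℕ) = Fintype.card C - 1 := by rw [← h]
    have := (P z).isLt
    rw [Fin.le_def, hval]
    omega
  · intro h
    have h1 := h (P.symm ⟨Fintype.card C - 1, Nat.sub_lt Fintype.card_pos Nat.one_pos⟩)
    rw [Equiv.apply_symm_apply] at h1
    have h2 := (P c).isLt
    rw [Fin.le_def] at h1
    simp only [Fin.val_mk] at h1
    refine (Fin.ext ?_).symm
    simp only [Fin.val_mk]
    omega

/-- the set of candidates strictly above `x` -/
def RowOf (P : Pref C) (x : C) : Finset C := univ.filter fun z => P x < P z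

lemma mem_RowOf {P : Pref C} {x z : C} : z ∈ RowOf P x ↔ P x < P z := by
  simp [RowOf]

lemma x_not_mem_RowOf {P : Pref C} {x : C} : x ∉ RowOf P x := by simp [RowOf]

lemma RowOf_empty_iff {P : Pref C} {x : C} : RowOf P x = ∅ ↔ topC P = x := by
  rw [topC_eq_iff, Finset.eq_empty_iff_forall_notMem]
  constructor
  · intro h z
    have := h z
    rw [mem_RowOf] at this
    exact le_of_not_gt this
  · intro h z hz
    rw [mem_RowOf] at hz
    exact absurd hz (not_lt.mpr (h z))

lemma kOrd_row (k : C → ℕ) (hk : Function.Injective k) (x : C) :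
    RowOf (kOrd k hk) x = univ.filter fun z => k x < k z := by
  ext z; simp [mem_RowOf, kOrd_lt_iff]

lemma kOrd_top (k : C → ℕ) (hk : Function.Injective k) (w : C)
    (hw : ∀ c, c ≠ w → k c < k w) : topC (kOrd k hk) = w := by
  rw [topC_eq_iff]
  intro z
  rcases eq_or_ne z w with rfl | h
  · exact le_refl _
  · exact le_of_lt ((kOrd_lt_iff k hk).mpr (hw z h))

lemma kOrd_dirAbove (k : C → ℕ) (hk : Function.Injective k) (x z : C)
    (hlt : k z < k x) (hgap : ∀ d, k d < k x → d ≠ z → k d < k z) :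
    DirAbove (kOrd k hk) x z := by
  show (krank k x : ℕ) = krank k z + 1
  unfold krank
  have : (univ.filter fun d => k d < k x) = insert z (univ.filter fun d => k d < k z) := by
    ext d
    simp only [mem_filter, mem_univ, true_and, mem_insert]
    constructor
    · intro hd
      rcases eq_or_ne d z with rfl | h
      · exact Or.inl rfl
      · exact Or.inr (hgap d hd h)
    · rintro (rfl | hd)
      · exact hlt
      · omega
  rw [this, Finset.card_insert_of_notMem (by simp)]

/-- positions are ranks -/
lemma pos_eq_rank (P : Pref C) (a : C) :
    (P a : ℕ) = (univ.filter fun d => P d < P a).card := by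
  have himg : Finset.image P (univ.filter fun d => P d < P a)
      = univ.filter (fun j : Fin (Fintype.card C) => j < P a) := by
    ext j
    simp only [Finset.mem_image, mem_filter, mem_univ, true_and]
    constructor
    · rintro ⟨d, hd, rfl⟩; exact hd
    · intro hj; exact ⟨P.symm j, by simpa using hj, by simp⟩
  have hcard : (univ.filter fun d => P d < P a).card
      = (univ.filter (fun j : Fin (Fintype.card C) => j < P a)).card := by
    rw [← himg, Finset.card_image_of_injective _ P.injective]
  rw [hcard]
  have : (univ.filter (fun j : Fin (Fintype.card C) => j < P a)) = Finset.Iio (P a) := by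
    ext j; simp
  rw [this, Fin.card_Iio]

lemma eq_of_no_discord {P Q : Pref C}
    (h : ∀ a b, Q a < Q b → P a < P b) : P = Q := by
  have h2 : ∀ a b, P a < P b ↔ Q a < Q b := by
    intro a b
    constructor
    · intro hab
      rcases lt_trichotomy (Q a) (Q b) with h' | h' | h'
      · exact h'
      · exact absurd (Q.injective h') (by rintro rfl; exact lt_irrefl _ hab)
      · exact absurd (h _ _ h') (by omega)
    · exact h a b
  apply Equiv.ext
  intro a
  apply Fin.ext
  rw [pos_eq_rank P a, pos_eq_rank Q a]
  congr 1
  ext d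
  simp [h2]

end Part2


section Part3
variable [Fintype C] [DecidableEq C] [Nonempty C]

lemma pos_ne {P : Pref C} {u w : C} (h : u ≠ w) : (P u : ℕ) ≠ (P w : ℕ) :=
  fun hh => h (P.injective (Fin.ext hh))

lemma dirAbove_ne {P : Pref C} {a b : C} (h : DirAbove P a b) : a ≠ b := by
  intro hh; subst hh; unfold DirAbove at h; omega

lemma swapIn_left (P : Pref C) (a b : C) : swapIn P a b a = P b := by
  simp [swapIn, Equiv.swap_apply_left]

lemma swapIn_right (P : Pref C) (a b : C) : swapIn P a b b = P a := by
  simp [swapIn, Equiv.swap_apply_right]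

lemma swapIn_other (P : Pref C) {a b c : C} (h1 : c ≠ a) (h2 : c ≠ b) :
    swapIn P a b c = P c := by
  simp [swapIn, Equiv.swap_apply_of_ne_of_ne h1 h2]

def Discord (P Q : Pref C) : Finset (C × C) :=
  univ.filter fun p => Q p.1 < Q p.2 ∧ P p.2 < P p.1

lemma eq_of_discord_empty {P Q : Pref C} (h : Discord P Q = ∅) : P = Q := by
  apply eq_of_no_discord
  intro a b hq
  by_contra hp
  have hab : a ≠ b := fun hh => by subst hh; exact lt_irrefl _ hq
  have : P b < P a := by
    rcases lt_trichotomy (P a) (P b) with h' | h' | h'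
    · exact absurd h' hp
    · exact absurd (P.injective h') hab
    · exact h'
  have : (a, b) ∈ Discord P Q := by simp [Discord, hq, this]
  rw [h] at this
  simp at this

lemma exists_adj_discord {P Q : Pref C} (h : Discord P Q ≠ ∅) :
    ∃ a b, DirAbove P a b ∧ Q a < Q b := by
  have key : ∀ (g : ℕ) (c d : C), Q c < Q d → P d < P c → (P c : ℕ) - (P d : ℕ) ≤ g →
      ∃ a b, DirAbove P a b ∧ Q a < Q b := by
    intro g
    induction g with
    | zero =>
      intro c d _ hp hg
      rw [Fin.lt_def] at hp
      omega
    | succ g ih =>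
      intro c d hq hp hg
      rw [Fin.lt_def] at hp
      by_cases hadj : (P c : ℕ) = (P d : ℕ) + 1
      · exact ⟨c, d, hadj, hq⟩
      · have hlt : (P d : ℕ) + 1 < Fintype.card C := by
          have := (P c).isLt; omega
        set mid := P.symm ⟨(P d : ℕ) + 1, hlt⟩ with hmiddef
        have hmid : (P mid : ℕ) = (P d : ℕ) + 1 := by
          rw [hmiddef, Equiv.apply_symm_apply]
        have hmc : mid ≠ c := fun hh => by rw [hh] at hmid; omega
        have hmd : mid ≠ d := fun hh => by rw [hh] at hmid; omega
        by_cases hq2 : Q c < Q mid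
        · exact ih c mid hq2 (by rw [Fin.lt_def]; omega) (by omega)
        · have hq3 : Q mid < Q c := by
            rcases lt_trichotomy (Q mid) (Q c) with h' | h' | h'
            · exact h'
            · exact absurd (Q.injective h') hmc
            · exact absurd h' hq2
          exact ih mid d (hq3.trans hq) (by rw [Fin.lt_def]; omega) (by omega)
  obtain ⟨⟨c, d⟩, hm⟩ := Finset.nonempty_iff_ne_empty.mpr h
  simp only [Discord, mem_filter, mem_univ, true_and] at hm
  exact key (P c : ℕ) c d hm.1 hm.2 (by omega)

lemma discord_swap_ssubset {P Q : Pref C} {a b : C} (hDir : DirAbove P a b)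
    (hq : Q a < Q b) : Discord (swapIn P a b) Q ⊂ Discord P Q := by
  have hab : a ≠ b := dirAbove_ne hDir
  have hD : (P a : ℕ) = (P b : ℕ) + 1 := hDir
  constructor
  · rintro ⟨c, d⟩ hm
    simp only [Discord, mem_filter, mem_univ, true_and] at hm ⊢
    obtain ⟨h1, h2⟩ := hm
    refine ⟨h1, ?_⟩
    rw [Fin.lt_def] at h2 ⊢
    by_cases hca : c = a
    · have ec : ((swapIn P a b) c : ℕ) = (P b : ℕ) := by rw [hca, swapIn_left]
      have gc : (P c : ℕ) = (P a : ℕ) := by rw [hca]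
      by_cases hda : d = a
      · have ed : ((swapIn P a b) d : ℕ) = (P b : ℕ) := by rw [hda, swapIn_left]
        omega
      · by_cases hdb : d = b
        · have ed : ((swapIn P a b) d : ℕ) = (P a : ℕ) := by rw [hdb, swapIn_right]
          omega
        · have ed : ((swapIn P a b) d : ℕ) = (P d : ℕ) := by rw [swapIn_other P hda hdb]
          omega
    · by_cases hcb : c = b
      · have ec : ((swapIn P a b) c : ℕ) = (P a : ℕ) := by rw [hcb, swapIn_right]
        have gc : (P c : ℕ) = (P b : ℕ) := by rw [hcb]
        by_cases hda : d = a
        · have hQ : Q b < Q a := by rw [← hcb, ← hda]; exact h1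
          exact absurd hq (not_lt.mpr hQ.le)
        · by_cases hdb : d = b
          · have ed : ((swapIn P a b) d : ℕ) = (P a : ℕ) := by rw [hdb, swapIn_right]
            omega
          · have ed : ((swapIn P a b) d : ℕ) = (P d : ℕ) := by rw [swapIn_other P hda hdb]
            have hne := pos_ne (P := P) hdb
            omega
      · have ec : ((swapIn P a b) c : ℕ) = (P c : ℕ) := by rw [swapIn_other P hca hcb]
        by_cases hda : d = a
        · have ed : ((swapIn P a b) d : ℕ) = (P b : ℕ) := by rw [hda, swapIn_left]
          have gd : (P d : ℕ) = (P a : ℕ) := by rw [hda]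
          have hne := pos_ne (P := P) hca
          omega
        · by_cases hdb : d = b
          · have ed : ((swapIn P a b) d : ℕ) = (P a : ℕ) := by rw [hdb, swapIn_right]
            have gd : (P d : ℕ) = (P b : ℕ) := by rw [hdb]
            omega
          · have ed : ((swapIn P a b) d : ℕ) = (P d : ℕ) := by rw [swapIn_other P hda hdb]
            omega
  · intro hsub
    have hmem : (a, b) ∈ Discord P Q := by
      simp only [Discord, mem_filter, mem_univ, true_and]
      exact ⟨hq, by rw [Fin.lt_def]; omega⟩
    have h3 := hsub hmem
    simp only [Discord, mem_filter, mem_univ, true_and] at h3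
    rw [Fin.lt_def, swapIn_left, swapIn_right] at h3
    omega

lemma row_swap_pres {P : Pref C} {a b x : C} (hDir : DirAbove P a b)
    (hax : a ≠ x) (hbx : b ≠ x) (z : C) :
    (swapIn P a b x < swapIn P a b z ↔ P x < P z) := by
  have hD : (P a : ℕ) = (P b : ℕ) + 1 := hDir
  have hx : swapIn P a b x = P x := swapIn_other P (Ne.symm hax) (Ne.symm hbx)
  rw [hx]
  by_cases hza : z = a
  · subst hza
    rw [swapIn_left, Fin.lt_def, Fin.lt_def]
    have h1 := pos_ne (P := P) (Ne.symm hax)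
    have h2 := pos_ne (P := P) (Ne.symm hbx)
    omega
  · by_cases hzb : z = b
    · subst hzb
      rw [swapIn_right, Fin.lt_def, Fin.lt_def]
      have h1 := pos_ne (P := P) (Ne.symm hax)
      have h2 := pos_ne (P := P) (Ne.symm hbx)
      omega
    · rw [swapIn_other P hza hzb]

lemma RowOf_swapIn {P : Pref C} {x z : C} (hDir : DirAbove P x z) :
    RowOf (swapIn P x z) x = insert z (RowOf P x) := by
  have hD : (P x : ℕ) = (P z : ℕ) + 1 := hDir
  have hxz : x ≠ z := dirAbove_ne hDir
  ext d
  rw [mem_RowOf, Finset.mem_insert, mem_RowOf, swapIn_left]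
  by_cases hdx : d = x
  · subst hdx
    rw [swapIn_left]
    simp only [lt_irrefl, false_iff, not_or]
    exact ⟨hxz, not_false⟩
  · by_cases hdz : d = z
    · subst hdz
      rw [swapIn_right, Fin.lt_def]
      simp only [eq_self_iff_true, true_or, iff_true]
      omega
    · rw [swapIn_other P hdx hdz, Fin.lt_def, Fin.lt_def]
      have h1 := pos_ne (P := P) hdx
      have h2 := pos_ne (P := P) hdz
      constructor
      · intro h; right; omega
      · rintro (rfl | h)
        · omega
        · omega

end Part3


section Part4
variable [Fintype C] [DecidableEq C] [Nonempty C]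

/-- key for an ordering with the set `s` above `x` and everything else below. -/
noncomputable def key0 (x : C) (s : Finset C) (c : C) : ℕ :=
  if c ∈ s then 2 * Fintype.card C + (Fintype.equivFin C c : ℕ)
  else if c = x then Fintype.card C
  else (Fintype.equivFin C c : ℕ)

lemma key0_inj (x : C) (s : Finset C) : Function.Injective (key0 x s) := by
  intro a b h
  have ha := (Fintype.equivFin C a).isLt
  have hb := (Fintype.equivFin C b).isLt
  unfold key0 at h
  split_ifs at h <;>
    first
      | omega
      | exact (Fintype.equivFin C).injective (Fin.ext (by omega))
      | simp_all

noncomputable def ordR (x : C) (s : Finset C) : Pref C := kOrd _ (key0_inj x s)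

lemma key0_x {x : C} {s : Finset C} (hx : x ∉ s) : key0 x s x = Fintype.card C := by
  simp [key0, hx]

lemma ordR_row (x : C) (s : Finset C) (hx : x ∉ s) : RowOf (ordR x s) x = s := by
  rw [ordR, kOrd_row]
  ext z
  have hz := (Fintype.equivFin C z).isLt
  simp only [mem_filter, mem_univ, true_and]
  rw [key0_x hx]
  unfold key0
  split_ifs with h1 h2
  · simp only [h1, iff_true]
    omega
  · subst h2
    simp only [hx, iff_false]
    omega
  · simp only [h1, iff_false]
    omega

/-- key for: row `s`, `w` on top. -/
noncomputable def keyTW (x : C) (s : Finset C) (w : C) (c : C) : ℕ :=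
  if c = w then 4 * Fintype.card C else key0 x s c

lemma key0_lt (x : C) (s : Finset C) (c : C) : key0 x s c < 3 * Fintype.card C := by
  have hc := (Fintype.equivFin C c).isLt
  unfold key0
  split_ifs <;> omega

lemma keyTW_inj (x : C) (s : Finset C) (w : C) : Function.Injective (keyTW x s w) := by
  intro a b h
  unfold keyTW at h
  have h1 := key0_lt x s a
  have h2 := key0_lt x s b
  have hM : 0 < Fintype.card C := Fintype.card_pos
  split_ifs at h with g1 g2 g2
  · exact g1.trans g2.symm
  · omega
  · omega
  · exact key0_inj x s h

noncomputable def ordTW (x : C) (s : Finset C) (w : C) : Pref C := kOrd _ (keyTW_inj x s w)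

lemma ordTW_row (x : C) (s : Finset C) (w : C) (hx : x ∉ s) (hw : w ∈ s) :
    RowOf (ordTW x s w) x = s := by
  rw [ordTW, kOrd_row]
  ext z
  have hz := (Fintype.equivFin C z).isLt
  have hwx : x ≠ w := fun hh => hx (hh ▸ hw)
  simp only [mem_filter, mem_univ, true_and]
  unfold keyTW
  rw [if_neg hwx, key0_x hx]
  split_ifs with h1
  · subst h1
    simp only [hw, iff_true]
    omega
  · unfold key0
    split_ifs with h2 h3
    · simp only [h2, iff_true]; omega
    · subst h3; simp only [hx, iff_false]; omega
    · simp only [h2, iff_false]; omega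

lemma ordTW_top (x : C) (s : Finset C) (w : C) : topC (ordTW x s w) = w := by
  apply kOrd_top
  intro c hc
  have h1 := key0_lt x s c
  have hM : 0 < Fintype.card C := Fintype.card_pos
  unfold keyTW
  rw [if_neg hc, if_pos rfl]
  omega

/-- key for: row `s`, `x` directly above `z`. -/
noncomputable def keyZ (x : C) (s : Finset C) (z : C) (c : C) : ℕ :=
  if c = z then Fintype.card C
  else if c = x then Fintype.card C + 1
  else if c ∈ s then 2 * Fintype.card C + (Fintype.equivFin C c : ℕ)
  else (Fintype.equivFin C c : ℕ)

lemma keyZ_inj (x : C) (s : Finset C) (z : C) : Function.Injective (keyZ x s z) := by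
  intro a b h
  have ha := (Fintype.equivFin C a).isLt
  have hb := (Fintype.equivFin C b).isLt
  unfold keyZ at h
  split_ifs at h <;>
    first
      | omega
      | exact (Fintype.equivFin C).injective (Fin.ext (by omega))
      | simp_all

noncomputable def ordZ (x : C) (s : Finset C) (z : C) : Pref C := kOrd _ (keyZ_inj x s z)

lemma ordZ_row (x : C) (s : Finset C) (z : C) (hx : x ∉ s) (hz : z ∉ s) (hzx : z ≠ x) :
    RowOf (ordZ x s z) x = s := by
  have hM : 1 < Fintype.card C := Fintype.one_lt_card_iff_nontrivial.mpr ⟨⟨z, x, hzx⟩⟩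
  rw [ordZ, kOrd_row]
  ext c
  have hc := (Fintype.equivFin C c).isLt
  simp only [mem_filter, mem_univ, true_and]
  unfold keyZ
  rw [if_neg (Ne.symm hzx), if_pos rfl]
  split_ifs with h1 h2 h3
  · subst h1; simp only [hz, iff_false]; omega
  · subst h2; simp only [hx, iff_false]; omega
  · simp only [h3, iff_true]; omega
  · simp only [h3, iff_false]; omega

lemma ordZ_dirAbove (x : C) (s : Finset C) (z : C) (hx : x ∉ s) (hz : z ∉ s) (hzx : z ≠ x) :
    DirAbove (ordZ x s z) x z := by
  apply kOrd_dirAbove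
  · unfold keyZ
    rw [if_pos rfl, if_neg (Ne.symm hzx), if_pos rfl]
    omega
  · intro d hd hdz
    have hdval := (Fintype.equivFin C d).isLt
    have hkx : keyZ x s z x = Fintype.card C + 1 := by
      unfold keyZ; rw [if_neg (Ne.symm hzx), if_pos rfl]
    have hkz : keyZ x s z z = Fintype.card C := by
      unfold keyZ; rw [if_pos rfl]
    rw [hkx] at hd
    rw [hkz]
    unfold keyZ at hd ⊢
    rw [if_neg hdz] at hd ⊢
    split_ifs at hd ⊢ <;> omega

end Part4


section Part5
variable [Fintype C] [DecidableEq C] [Nonempty C] {n : ℕ}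
variable {v : (Fin n → Pref C) → C → ℝ}

lemma rows_iff_of_RowOf_eq {P Q : Pref C} {x : C} (h : RowOf P x = RowOf Q x) :
    ∀ z, (P x < P z ↔ Q x < Q z) := by
  intro z
  rw [← mem_RowOf, ← mem_RowOf, h]

lemma vx_update_aux (hpr : PairwiseResponsive v) (x : C) :
    ∀ (N : ℕ) (Pvec : Fin n → Pref C) (i : Fin n) (Q : Pref C),
      (Discord (Pvec i) Q).card ≤ N → (∀ z, (Pvec i) x < (Pvec i) z ↔ Q x < Q z) →
      v (Function.update Pvec i Q) x = v Pvec x := by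
  intro N
  induction N with
  | zero =>
    intro Pvec i Q hc _
    have h0 : Pvec i = Q :=
      eq_of_discord_empty (Finset.card_eq_zero.mp (Nat.le_zero.mp hc))
    rw [← h0, Function.update_eq_self]
  | succ N ih =>
    intro Pvec i Q hc hrow
    by_cases hD : Discord (Pvec i) Q = ∅
    · have h0 : Pvec i = Q := eq_of_discord_empty hD
      rw [← h0, Function.update_eq_self]
    · obtain ⟨a, b, hDir, hq⟩ := exists_adj_discord hD
      have hDval : ((Pvec i) a : ℕ) = ((Pvec i) b : ℕ) + 1 := hDir
      have hax : a ≠ x := by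
        intro heq
        have h1 : ((Pvec i) x : ℕ) < ((Pvec i) b : ℕ) := by
          have h2 := (hrow b).mpr (heq ▸ hq)
          rwa [Fin.lt_def] at h2
        rw [heq] at hDval
        omega
      have hbx : b ≠ x := by
        intro heq
        have h1 : (Pvec i) x < (Pvec i) a := by
          rw [Fin.lt_def, ← heq]
          omega
        exact absurd ((hrow a).mp h1) (not_lt.mpr (heq ▸ hq).le)
      have hswap := hpr Pvec i a b x hDir (Ne.symm hax) (Ne.symm hbx)
      set P2 := Function.update Pvec i (swapIn (Pvec i) a b) with hP2
      have hP2i : P2 i = swapIn (Pvec i) a b := Function.update_self _ _ _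
      have hrow2 : ∀ z, (P2 i) x < (P2 i) z ↔ Q x < Q z := by
        intro z
        rw [hP2i]
        exact (row_swap_pres hDir hax hbx z).trans (hrow z)
      have hcard : (Discord (P2 i) Q).card ≤ N := by
        rw [hP2i]
        have := Finset.card_lt_card (discord_swap_ssubset hDir hq)
        omega
      have hfin := ih P2 i Q hcard hrow2
      rw [hP2, Function.update_idem] at hfin
      rw [hfin, hswap]

lemma vx_rows_update (hpr : PairwiseResponsive v) (x : C) (Pvec : Fin n → Pref C)
    (i : Fin n) (Q : Pref C) (hrow : ∀ z, (Pvec i) x < (Pvec i) z ↔ Q x < Q z) :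
    v (Function.update Pvec i Q) x = v Pvec x :=
  vx_update_aux hpr x (Discord (Pvec i) Q).card Pvec i Q (le_refl _) hrow

lemma vx_rows_profile (hpr : PairwiseResponsive v) (x : C) (Pvec Qvec : Fin n → Pref C)
    (h : ∀ i z, (Pvec i) x < (Pvec i) z ↔ (Qvec i) x < (Qvec i) z) :
    v Pvec x = v Qvec x := by
  have key : ∀ s : Finset (Fin n),
      v (fun i => if i ∈ s then Qvec i else Pvec i) x = v Pvec x := by
    intro s
    induction s using Finset.induction_on with
    | empty => simp
    | @insert j s hj ih =>
      have heq : (fun i => if i ∈ insert j s then Qvec i else Pvec i)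
          = Function.update (fun i => if i ∈ s then Qvec i else Pvec i) j (Qvec j) := by
        funext i
        by_cases hij : i = j
        · subst hij; simp [hj]
        · rw [Function.update_of_ne hij]
          simp [Finset.mem_insert, hij]
      rw [heq, vx_rows_update hpr x _ j (Qvec j) ?_, ih]
      intro z
      simp only [if_neg hj]
      exact h j z
  have h2 := key univ
  simp only [mem_univ, if_true] at h2
  exact h2.symm

lemma swap_delta_x (hv : IsVotingRule v) (hpr : PairwiseResponsive v)
    {U : Fin n → Pref C} {i : Fin n} {x z : C} (hDir : DirAbove (U i) x z) (hxz : x ≠ z) :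
    v (Function.update U i (swapIn (U i) x z)) x - v U x
      = -(v (Function.update U i (swapIn (U i) x z)) z - v U z) := by
  set U' := Function.update U i (swapIn (U i) x z) with hU'
  have hsplit : ∀ (W : Fin n → Pref C),
      ∑ c, v W c = v W x + (v W z + ∑ c ∈ (univ.erase x).erase z, v W c) := by
    intro W
    rw [Finset.add_sum_erase _ (v W) (Finset.mem_erase.mpr ⟨Ne.symm hxz, mem_univ z⟩),
      Finset.add_sum_erase _ (v W) (mem_univ x)]
  have hoth : ∑ c ∈ (univ.erase x).erase z, v U' c = ∑ c ∈ (univ.erase x).erase z, v U c := by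
    apply Finset.sum_congr rfl
    intro c hc
    simp only [Finset.mem_erase] at hc
    exact hpr U i x z c hDir hc.2.1 hc.1
  have h1 := hsplit U'
  have h2 := hsplit U
  have h3 : ∑ c, v U' c = ∑ c, v U c := by rw [hv.2, hv.2]
  linarith

end Part5


section Part6
variable [Fintype C] [DecidableEq C] [Nonempty C] {n : ℕ}
variable {v : (Fin n → Pref C) → C → ℝ}

/-- value of `x` on the profile realizing the "above-`x` rows" matrix `A`. -/
noncomputable def Fval (v : (Fin n → Pref C) → C → ℝ) (x : C)
    (A : Fin n → Finset C) : ℝ :=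
  v (fun j => ordR x (A j)) x

lemma Fval_congr_rows (hpr : PairwiseResponsive v) (x : C) {A : Fin n → Finset C}
    (hxA : ∀ j, x ∉ A j) (W : Fin n → Pref C) (hW : ∀ j, RowOf (W j) x = A j) :
    Fval v x A = v W x := by
  apply vx_rows_profile hpr x
  intro j zz
  apply rows_iff_of_RowOf_eq
  rw [hW j, ordR_row x (A j) (hxA j)]

lemma step_iso (hv : IsVotingRule v) (hpr : PairwiseResponsive v)
    (hpi : PairwiseIsolated v) (x : C) {A : Fin n → Finset C}
    (hxA : ∀ j, x ∉ A j) {i : Fin n} {z w : C} (hw : w ∈ A i) (hz : z ∉ A i)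
    (hzx : z ≠ x) :
    Fval v x (Function.update A i (insert z (A i))) - Fval v x A
      = Fval v x (fun j => Function.update A i (insert z (A i)) j ∪ {w})
        - Fval v x (fun j => A j ∪ {w}) := by
  have hwx : w ≠ x := fun hh => hxA i (hh ▸ hw)
  have hzw : z ≠ w := fun hh => hz (hh ▸ hw)
  have hwsub : {w} ⊆ A i := Finset.singleton_subset_iff.mpr hw
  set Q := ordZ x (A i) z with hQdef
  have hQrow : RowOf Q x = A i := ordZ_row x (A i) z (hxA i) hz hzx
  have hQdir : DirAbove Q x z := ordZ_dirAbove x (A i) z (hxA i) hz hzx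
  set Anew := Function.update A i (insert z (A i)) with hAnew
  have hxAnew : ∀ j, x ∉ Anew j := by
    intro j
    rw [hAnew, Function.update_apply]
    split_ifs with h
    · simp [hxA i, Ne.symm hzx]
    · exact hxA j
  set R := Function.update (fun j => ordR x (A j)) i Q with hR
  set S := Function.update (fun j => ordR x (A j ∪ {w})) i Q with hS
  have hRi : R i = Q := Function.update_self _ _ _
  have hSi : S i = Q := Function.update_self _ _ _
  have hrowswap : RowOf (swapIn Q x z) x = insert z (A i) := by
    rw [RowOf_swapIn hQdir, hQrow]
  -- values of the four profiles
  have hvR : v R x = Fval v x A := by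
    apply vx_rows_update hpr x _ i Q
    apply rows_iff_of_RowOf_eq
    rw [hQrow, ordR_row x (A i) (hxA i)]
  have hvS : v S x = Fval v x (fun j => A j ∪ {w}) := by
    apply vx_rows_update hpr x _ i Q
    apply rows_iff_of_RowOf_eq
    rw [hQrow, ordR_row x (A i ∪ {w}) (by simp [hxA i, Ne.symm hwx]),
      Finset.union_eq_left.mpr hwsub]
  have hvR' : v (Function.update R i (swapIn Q x z)) x = Fval v x Anew := by
    have hReq : Function.update R i (swapIn Q x z)
        = Function.update (fun j => ordR x (Anew j)) i (swapIn Q x z) := by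
      funext j
      by_cases hji : j = i
      · subst hji
        rw [Function.update_self, Function.update_self]
      · rw [Function.update_of_ne hji, Function.update_of_ne hji, hR,
          Function.update_of_ne hji]
        congr 1
        rw [hAnew, Function.update_of_ne hji]
    rw [hReq]
    apply vx_rows_update hpr x _ i (swapIn Q x z)
    apply rows_iff_of_RowOf_eq
    rw [hrowswap, ordR_row x (Anew i) ?_]
    · rw [hAnew, Function.update_self]
    · exact hxAnew i
  have hvS' : v (Function.update S i (swapIn Q x z)) x
      = Fval v x (fun j => Anew j ∪ {w}) := by
    have hSeq : Function.update S i (swapIn Q x z)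
        = Function.update (fun j => ordR x (Anew j ∪ {w})) i (swapIn Q x z) := by
      funext j
      by_cases hji : j = i
      · subst hji
        rw [Function.update_self, Function.update_self]
      · rw [Function.update_of_ne hji, Function.update_of_ne hji, hS,
          Function.update_of_ne hji]
        congr 2
        rw [hAnew, Function.update_of_ne hji]
    rw [hSeq]
    apply vx_rows_update hpr x _ i (swapIn Q x z)
    apply rows_iff_of_RowOf_eq
    rw [hrowswap, ordR_row x (Anew i ∪ {w}) ?_]
    · rw [hAnew, Function.update_self]
      rw [Finset.union_eq_left.mpr (hwsub.trans (Finset.subset_insert z (A i)))]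
    · rw [hAnew, Function.update_self]
      simp [hxA i, Ne.symm hzx, Ne.symm hwx]
  -- isolation
  have hiso := hpi i R S x z (by rw [hRi]; exact hQdir) (hSi.trans hRi.symm) ?_
  · -- convert z-differences to x-differences
    have hdR := swap_delta_x hv hpr (U := R) (i := i) (x := x) (z := z)
      (by rw [hRi]; exact hQdir) (Ne.symm hzx)
    have hdS := swap_delta_x hv hpr (U := S) (i := i) (x := x) (z := z)
      (by rw [hSi]; exact hQdir) (Ne.symm hzx)
    rw [hRi] at hdR
    rw [hSi] at hdS
    rw [hRi, hSi] at hiso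
    rw [← hvR, ← hvS, ← hvR', ← hvS']
    linarith
  · -- matching x-z comparisons
    intro j hji
    rw [hR, hS, Function.update_of_ne hji, Function.update_of_ne hji]
    unfold PrefOver
    have hAj : RowOf (ordR x (A j)) x = A j := ordR_row x (A j) (hxA j)
    have hAwj : RowOf (ordR x (A j ∪ {w})) x = A j ∪ {w} :=
      ordR_row x (A j ∪ {w}) (by simp [hxA j, Ne.symm hwx])
    have hmem2 : (ordR x (A j ∪ {w})) x < (ordR x (A j ∪ {w})) z
        ↔ (ordR x (A j)) x < (ordR x (A j)) z := by
      rw [← mem_RowOf, ← mem_RowOf, hAwj, hAj]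
      simp [hzw]
    have e1 : (ordR x (A j)) z ≠ (ordR x (A j)) x :=
      fun hh => hzx ((ordR x (A j)).injective hh)
    have e2 : (ordR x (A j ∪ {w})) z ≠ (ordR x (A j ∪ {w})) x :=
      fun hh => hzx ((ordR x (A j ∪ {w})).injective hh)
    constructor
    · intro hlt
      rcases lt_trichotomy ((ordR x (A j ∪ {w})) z) ((ordR x (A j ∪ {w})) x) with h' | h' | h'
      · exact h'
      · exact absurd h' e2
      · exact absurd (hmem2.mp h') (not_lt.mpr hlt.le)
    · intro hlt
      rcases lt_trichotomy ((ordR x (A j)) z) ((ordR x (A j)) x) with h' | h' | h'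
      · exact h'
      · exact absurd h' e1
      · exact absurd (hmem2.mpr h') (not_lt.mpr hlt.le)

end Part6


section Part7
variable [Fintype C] [DecidableEq C] [Nonempty C] {n : ℕ}
variable {v : (Fin n → Pref C) → C → ℝ}

lemma batch_iso (hv : IsVotingRule v) (hpr : PairwiseResponsive v)
    (hpi : PairwiseIsolated v) (x w : C) :
    ∀ (N : ℕ) (A B : Fin n → Finset C), (∀ j, x ∉ B j) → (∀ j, A j ⊆ B j) →
      (∀ j, A j ≠ B j → w ∈ A j) → (∑ j, (B j \ A j).card ≤ N) →
      Fval v x B - Fval v x A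
        = Fval v x (fun j => B j ∪ {w}) - Fval v x (fun j => A j ∪ {w}) := by
  intro N
  induction N with
  | zero =>
    intro A B hxB hsub hw hcard
    have hAB : A = B := by
      funext j
      refine Finset.Subset.antisymm (hsub j) ?_
      have h0 : (B j \ A j).card = 0 := by
        have hall := Finset.sum_eq_zero_iff.mp (Nat.le_zero.mp hcard) j (mem_univ j)
        simpa using hall
      rw [Finset.card_eq_zero, Finset.sdiff_eq_empty_iff_subset] at h0
      exact h0
    rw [hAB]
    simp
  | succ N ih =>
    intro A B hxB hsub hw hcard
    by_cases hAB : A = B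
    · rw [hAB]; simp
    · obtain ⟨i, hne⟩ := Function.ne_iff.mp hAB
      obtain ⟨z, hzB, hzA⟩ :=
        Finset.exists_of_ssubset (Finset.ssubset_iff_subset_ne.mpr ⟨hsub i, hne⟩)
      have hxA : ∀ j, x ∉ A j := fun j hh => hxB j (hsub j hh)
      have hzx : z ≠ x := fun hh => hxB i (hh ▸ hzB)
      have hwAi : w ∈ A i := hw i hne
      set A' := Function.update A i (insert z (A i)) with hA'
      have hA'app : ∀ j, A' j = if j = i then insert z (A i) else A j := by
        intro j; rw [hA', Function.update_apply]
      have hsub' : ∀ j, A' j ⊆ B j := by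
        intro j
        rw [hA'app]
        split_ifs with h
        · subst h
          exact Finset.insert_subset hzB (hsub j)
        · exact hsub j
      have hw' : ∀ j, A' j ≠ B j → w ∈ A' j := by
        intro j hne'
        rw [hA'app] at hne' ⊢
        split_ifs at hne' ⊢ with h
        · exact Finset.mem_insert_of_mem hwAi
        · exact hw j hne'
      have hcard' : ∑ j, (B j \ A' j).card ≤ N := by
        have hstep : ∀ j, (B j \ A' j).card
            = if j = i then (B j \ A j).card - 1 else (B j \ A j).card := by
          intro j
          rw [hA'app]
          split_ifs with h
          · subst h
            rw [Finset.sdiff_insert, Finset.card_erase_of_mem (Finset.mem_sdiff.mpr ⟨hzB, hzA⟩)]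
          · rfl
        have hpos : 0 < (B i \ A i).card :=
          Finset.card_pos.mpr ⟨z, Finset.mem_sdiff.mpr ⟨hzB, hzA⟩⟩
        have hsum1 : ∑ j, (B j \ A' j).card + 1 = ∑ j, (B j \ A j).card := by
          rw [← Finset.add_sum_erase _ (fun j => (B j \ A' j).card) (mem_univ i),
            ← Finset.add_sum_erase _ (fun j => (B j \ A j).card) (mem_univ i)]
          have heq : ∑ j ∈ univ.erase i, (B j \ A' j).card
              = ∑ j ∈ univ.erase i, (B j \ A j).card := by
            apply Finset.sum_congr rfl
            intro j hj
            rw [hstep j, if_neg (Finset.mem_erase.mp hj).1]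
          rw [heq, hstep i, if_pos rfl]
          omega
        omega
      have hstep := step_iso hv hpr hpi x hxA hwAi hzA hzx
      have hih := ih A' B hxB hsub' hw' hcard'
      rw [← hA'] at hstep
      linarith

lemma Fplus_le (hv : IsVotingRule v) (hpr : PairwiseResponsive v) {ε : ℝ}
    (hsu : StrongUnanimity ε v) (x w : C) (hwx : w ≠ x) (M : Fin n → Finset C)
    (hxM : ∀ j, x ∉ M j) :
    0 ≤ Fval v x (fun j => M j ∪ {w}) ∧ Fval v x (fun j => M j ∪ {w}) ≤ ε := by
  constructor
  · exact hv.1 _ x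
  · set W : Fin n → Pref C := fun j => ordTW x (M j ∪ {w}) w with hW
    have h1 : Fval v x (fun j => M j ∪ {w}) = v W x := by
      apply Fval_congr_rows hpr x (fun j => by simp [hxM j, Ne.symm hwx]) W
      intro j
      exact ordTW_row x (M j ∪ {w}) w (by simp [hxM j, Ne.symm hwx]) (by simp)
    have h2 := hsu w W (fun i => ordTW_top x (M i ∪ {w}) w)
    have h3 : v W x + v W w ≤ 1 := by
      have hsum := hv.2 W
      have hsplit : ∑ c, v W c = v W w + ∑ c ∈ univ.erase w, v W c :=
        (Finset.add_sum_erase _ (v W) (mem_univ w)).symm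
      have hx : v W x ≤ ∑ c ∈ univ.erase w, v W c :=
        Finset.single_le_sum (f := v W) (fun c _ => hv.1 W c)
          (Finset.mem_erase.mpr ⟨Ne.symm hwx, mem_univ x⟩)
      linarith
    linarith [h2, h3, h1.le]

lemma batch_bound (hv : IsVotingRule v) (hpr : PairwiseResponsive v)
    (hpi : PairwiseIsolated v) {ε : ℝ} (hsu : StrongUnanimity ε v) (x w : C)
    (hwx : w ≠ x) (A B : Fin n → Finset C) (hxB : ∀ j, x ∉ B j)
    (hsub : ∀ j, A j ⊆ B j) (hw : ∀ j, A j ≠ B j → w ∈ A j) :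
    |Fval v x B - Fval v x A| ≤ ε := by
  have hiso := batch_iso hv hpr hpi x w (∑ j, (B j \ A j).card) A B hxB hsub hw (le_refl _)
  have hxA : ∀ j, x ∉ A j := fun j hh => hxB j (hsub j hh)
  have b1 := Fplus_le hv hpr hsu x w hwx A hxA
  have b2 := Fplus_le hv hpr hsu x w hwx B hxB
  rw [hiso, abs_le]
  constructor <;> linarith [b1.1, b1.2, b2.1, b2.2]

end Part7


section Part8
variable [Fintype C] [DecidableEq C] [Nonempty C] {n : ℕ}
variable {v : (Fin n → Pref C) → C → ℝ}

lemma sched (hv : IsVotingRule v) (hpr : PairwiseResponsive v)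
    (hpi : PairwiseIsolated v) {ε : ℝ} (hsu : StrongUnanimity ε v) (x w₀ : C)
    (hw₀ : w₀ ≠ x) (A0 : Fin n → Finset C) (hx0 : ∀ j, x ∉ A0 j) :
    |Fval v x A0 - Fval v x (fun j => if A0 j = ∅ then ∅ else univ.erase x)|
      ≤ (Fintype.card C : ℝ) * ε := by
  set St : Finset C → Fin n → Finset C :=
    fun t j => A0 j ∪ (if (A0 j ∩ t).Nonempty then {w₀} else ∅) with hSt
  have hxSt : ∀ t j, x ∉ St t j := by
    intro t j hmem
    rw [hSt] at hmem
    simp only [Finset.mem_union] at hmem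
    rcases hmem with h | h
    · exact hx0 j h
    · split_ifs at h
      · exact hw₀ ((Finset.mem_singleton.mp h).symm)
      · simp at h
  have hclaim : ∀ t : Finset C, t ⊆ univ.erase x →
      |Fval v x A0 - Fval v x (St t)| ≤ (t.card : ℝ) * ε := by
    intro t
    induction t using Finset.induction_on with
    | empty =>
      intro _
      have hSe : St ∅ = A0 := by
        funext j
        simp [hSt]
      rw [hSe]
      simp
    | @insert u t hu ih =>
      intro hsubt
      have hut : t ⊆ univ.erase x := (Finset.subset_insert u t).trans hsubt
      have hux : u ≠ x := (Finset.mem_erase.mp (hsubt (Finset.mem_insert_self u t))).1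
      have hmono : ∀ j, St t j ⊆ St (insert u t) j := by
        intro j
        rw [hSt]
        apply Finset.union_subset_union_right
        split_ifs with h1 h2
        · exact Finset.Subset.refl _
        · exact absurd (h1.mono (Finset.inter_subset_inter (Finset.Subset.refl _)
            (Finset.subset_insert u t))) h2
        · exact Finset.empty_subset _
        · exact Finset.Subset.refl _
      have hb : |Fval v x (St (insert u t)) - Fval v x (St t)| ≤ ε := by
        apply batch_bound hv hpr hpi hsu x u hux (St t) (St (insert u t))
          (hxSt _) hmono
        intro j hne
        by_cases h1 : (A0 j ∩ t).Nonempty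
        · exfalso
          apply hne
          rw [hSt]
          simp only []
          rw [if_pos h1, if_pos (h1.mono (Finset.inter_subset_inter (Finset.Subset.refl _)
            (Finset.subset_insert u t)))]
        · by_cases h2 : (A0 j ∩ insert u t).Nonempty
          · obtain ⟨c, hc⟩ := h2
            rw [Finset.mem_inter, Finset.mem_insert] at hc
            rcases hc.2 with rfl | hct
            · rw [hSt]
              exact Finset.mem_union_left _ hc.1
            · exact absurd ⟨c, Finset.mem_inter.mpr ⟨hc.1, hct⟩⟩ h1
          · exfalso
            apply hne
            rw [hSt]
            simp only []
            rw [if_neg h1, if_neg h2]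
      have htri := abs_sub_le (Fval v x A0) (Fval v x (St t)) (Fval v x (St (insert u t)))
      have hcd : ((insert u t).card : ℝ) = (t.card : ℝ) + 1 := by
        rw [Finset.card_insert_of_notMem hu]
        push_cast
        ring
      have hih := ih hut
      rw [hcd]
      rw [abs_sub_comm] at hb
      linarith
  have hmain := hclaim (univ.erase x) (Finset.Subset.refl _)
  have hA0sub : ∀ j, A0 j ⊆ univ.erase x := by
    intro j c hc
    exact Finset.mem_erase.mpr ⟨fun hh => hx0 j (hh ▸ hc), mem_univ c⟩
  have hSfull : ∀ j, St (univ.erase x) j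
      = A0 j ∪ (if (A0 j).Nonempty then {w₀} else ∅) := by
    intro j
    rw [hSt]
    simp only []
    rw [Finset.inter_eq_left.mpr (hA0sub j)]
  have hfin : |Fval v x (fun j => if A0 j = ∅ then ∅ else univ.erase x)
      - Fval v x (St (univ.erase x))| ≤ ε := by
    apply batch_bound hv hpr hpi hsu x w₀ hw₀ (St (univ.erase x)) _ ?_ ?_ ?_
    · intro j
      split_ifs with h
      · simp
      · simp
    · intro j
      rw [hSfull j]
      by_cases h : A0 j = ∅
      · rw [if_pos h, h]
        simp
      · rw [if_neg h, if_pos (Finset.nonempty_iff_ne_empty.mpr h)]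
        apply Finset.union_subset (hA0sub j)
        simp only [Finset.singleton_subset_iff]
        exact Finset.mem_erase.mpr ⟨hw₀, mem_univ w₀⟩
    · intro j hne
      rw [hSfull j] at hne ⊢
      by_cases h : A0 j = ∅
      · exfalso
        apply hne
        rw [if_pos h, h]
        simp
      · rw [if_pos (Finset.nonempty_iff_ne_empty.mpr h)]
        simp
  have hcd : ((univ.erase x).card : ℝ) = (Fintype.card C : ℝ) - 1 := by
    rw [Finset.card_erase_of_mem (mem_univ x), Finset.card_univ]
    have h1 : 1 ≤ Fintype.card C := Fintype.card_pos
    push_cast [Nat.cast_sub h1]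
    ring
  have htri := abs_sub_le (Fval v x A0) (Fval v x (St (univ.erase x)))
    (Fval v x (fun j => if A0 j = ∅ then ∅ else univ.erase x))
  rw [abs_sub_comm] at hfin
  rw [hcd] at hmain
  linarith

end Part8

end TC

open TC

/-- Tops-count lemma: the selection probability of `x` depends on
the number of voters ranking `x` first, up to 2mε. -/
theorem tops_count_lemma [Fintype C] [Nonempty C] [DecidableEq C] {n : ℕ}
    (v : (Fin n → Pref C) → C → ℝ) (hv : IsVotingRule v) (han : Anonymous v)
    (hpr : PairwiseResponsive v) (hpi : PairwiseIsolated v) (ε : ℝ)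
    (hsu : StrongUnanimity ε v) (x : C) (Pvec Pvec' : Fin n → Pref C)
    (hcount : (Finset.univ.filter fun i => topC (Pvec i) = x).card =
      (Finset.univ.filter fun i => topC (Pvec' i) = x).card) :
    |v Pvec x - v Pvec' x| ≤ 2 * (Fintype.card C : ℝ) * ε := by
  classical
  by_cases hM : 1 < Fintype.card C
  · -- main case
    obtain ⟨w₀, hw₀⟩ := Fintype.exists_ne_of_one_lt_card hM x
    have hx0 : ∀ j, x ∉ RowOf (Pvec j) x := fun j => x_not_mem_RowOf
    have hx0' : ∀ j, x ∉ RowOf (Pvec' j) x := fun j => x_not_mem_RowOf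
    have hPeq : Fval v x (fun j => RowOf (Pvec j) x) = v Pvec x :=
      Fval_congr_rows hpr x hx0 Pvec (fun j => rfl)
    have hPeq' : Fval v x (fun j => RowOf (Pvec' j) x) = v Pvec' x :=
      Fval_congr_rows hpr x hx0' Pvec' (fun j => rfl)
    have hs1 := sched hv hpr hpi hsu x w₀ hw₀ (fun j => RowOf (Pvec j) x) hx0
    have hs2 := sched hv hpr hpi hsu x w₀ hw₀ (fun j => RowOf (Pvec' j) x) hx0'
    set FP : Fin n → Finset C :=
      fun j => if RowOf (Pvec j) x = ∅ then ∅ else univ.erase x with hFP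
    set FP' : Fin n → Finset C :=
      fun j => if RowOf (Pvec' j) x = ∅ then ∅ else univ.erase x with hFP'
    -- the two canonical profiles agree up to a permutation of the voters
    set p : Fin n → Prop := fun i => topC (Pvec i) = x with hp
    set p' : Fin n → Prop := fun i => topC (Pvec' i) = x with hp'
    have hc1 : Fintype.card {i // p' i} = Fintype.card {i // p i} := by
      rw [Fintype.card_subtype, Fintype.card_subtype]
      exact hcount.symm
    have hc2 : Fintype.card {i // ¬ p' i} = Fintype.card {i // ¬ p i} := by
      rw [Fintype.card_subtype_compl, Fintype.card_subtype_compl, hc1]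
    set e1 := Fintype.equivOfCardEq hc1 with he1
    set e2 := Fintype.equivOfCardEq hc2 with he2
    set σ : Equiv.Perm (Fin n) :=
      (Equiv.sumCompl p').symm.trans ((e1.sumCongr e2).trans (Equiv.sumCompl p)) with hσdef
    have hσ : ∀ i, p (σ i) ↔ p' i := by
      intro i
      by_cases h : p' i
      · have hval : σ i = ((e1 ⟨i, h⟩ : {i // p i}) : Fin n) := by
          simp only [hσdef, Equiv.trans_apply, Equiv.sumCompl_symm_apply_of_pos h,
            Equiv.sumCongr_apply, Sum.map_inl, Equiv.sumCompl_apply_inl]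
        rw [hval]
        exact iff_of_true (e1 ⟨i, h⟩).2 h
      · have hval : σ i = ((e2 ⟨i, h⟩ : {i // ¬ p i}) : Fin n) := by
          simp only [hσdef, Equiv.trans_apply, Equiv.sumCompl_symm_apply_of_neg h,
            Equiv.sumCongr_apply, Sum.map_inr, Equiv.sumCompl_apply_inr]
        rw [hval]
        exact iff_of_false (e2 ⟨i, h⟩).2 h
    have hfuneq : (fun j => ordR x (FP j)) ∘ σ = fun j => ordR x (FP' j) := by
      funext i
      simp only [Function.comp_apply]
      congr 1
      have h1 : (RowOf (Pvec (σ i)) x = ∅) ↔ (RowOf (Pvec' i) x = ∅) := by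
        rw [RowOf_empty_iff, RowOf_empty_iff]
        exact hσ i
      show (if RowOf (Pvec (σ i)) x = ∅ then (∅ : Finset C) else univ.erase x)
          = (if RowOf (Pvec' i) x = ∅ then (∅ : Finset C) else univ.erase x)
      by_cases h : RowOf (Pvec' i) x = ∅
      · rw [if_pos (h1.mpr h), if_pos h]
      · rw [if_neg (fun hh => h (h1.mp hh)), if_neg h]
    have hFPeq : Fval v x FP = Fval v x FP' := by
      have h2 : Fval v x FP' = v ((fun j => ordR x (FP j)) ∘ σ) x := by
        rw [hfuneq]; rfl
      rw [h2, han σ _ x]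
      rfl
    have htri := abs_sub_le (v Pvec x) (Fval v x FP) (v Pvec' x)
    rw [hPeq] at hs1
    rw [hPeq'] at hs2
    rw [hFPeq] at htri hs1
    have h3 : |Fval v x FP' - v Pvec' x| ≤ (Fintype.card C : ℝ) * ε := by
      rw [abs_sub_comm]
      exact hs2
    have h2M : 2 * (Fintype.card C : ℝ) * ε
        = (Fintype.card C : ℝ) * ε + (Fintype.card C : ℝ) * ε := by ring
    rw [h2M]
    linarith
  · -- singleton case
    have hM1 : Fintype.card C = 1 := by
      have := Fintype.card_pos (α := C)
      omega
    have hsing : Subsingleton C := Fintype.card_le_one_iff_subsingleton.mp (by omega)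
    have hall : ∀ (W : Fin n → Pref C), v W x = 1 := by
      intro W
      have hsum := hv.2 W
      have hsingle : ∑ c, v W c = v W x :=
        Finset.sum_eq_single_of_mem x (mem_univ x)
          (fun b _ hb => absurd (Subsingleton.elim b x) hb)
      linarith
    have hε : 0 ≤ ε := by
      have h1 := hsu x Pvec (fun i => Subsingleton.elim _ _)
      have h2 := hall Pvec
      linarith
    rw [hall Pvec, hall Pvec']
    simp only [sub_self, abs_zero]
    have h4 : (0:ℝ) ≤ 2 * (Fintype.card C : ℝ) := by positivity
    exact mul_nonneg h4 hε
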